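/- Numerator convergence: under the assumptions that W is almost surely continuous, τ_{N(1)} → 1 a.s., N(1)/N → 1 a.s., and max_{1 ≤ j ≤ 2N} t_j → 0 a.s., we have ∑_{j=1}^{N(1)} τ_j (W_{τ_j} − W_{τ_{j−1}}) → ∫_0^1 (W_1 − W_t) dt almost surely as N → ∞. -/

import Mathlib

open MeasureTheory Filter


/-- Telescoping sum over `Icc 1 n`. -/
lemma tele_sum (F : ℕ → ℝ) (n : ℕ) :
    ∑ j ∈ Finset.Icc 1 n, (F j - F (j - 1)) = F n - F 0 := by
  induction n with
  | zero => simp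
  | succ k ih =>
    rw [Finset.sum_Icc_succ_top (Nat.le_add_left 1 k), ih]
    simp only [Nat.add_sub_cancel]
    ring

/-- If increments up to `n` are nonnegative, `σ 0 ≤ σ n`. -/
lemma nonneg_aux (σ : ℕ → ℝ) :
    ∀ n : ℕ, (∀ j, 1 ≤ j → j ≤ n → 0 ≤ σ j - σ (j - 1)) → σ 0 ≤ σ n := by
  intro n
  induction n with
  | zero => intro _; exact le_rfl
  | succ k ih =>
    intro h
    have h1 := h (k + 1) (by omega) le_rfl
    have h2 := ih (fun j hj hj' => h j hj (by omega))
    simp only [Nat.add_sub_cancel] at h1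
    linarith

/-- Key quantitative estimate for a left Riemann sum against the integral. -/
lemma riemann_est (f : ℝ → ℝ) (hfc : ContinuousOn f (Set.Icc 0 1))
    (ε δ : ℝ)
    (hf : ∀ x ∈ Set.Icc (0:ℝ) 1, ∀ y ∈ Set.Icc (0:ℝ) 1, |x - y| ≤ δ → |f x - f y| ≤ ε)
    (σ : ℕ → ℝ) (h0 : σ 0 = 0) :
    ∀ n : ℕ, (∀ j, 1 ≤ j → j ≤ n → 0 ≤ σ j - σ (j - 1) ∧ σ j - σ (j - 1) ≤ δ) →
      σ n ≤ 1 →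
      |(∑ j ∈ Finset.Icc 1 n, f (σ (j - 1)) * (σ j - σ (j - 1))) -
          ∫ s in (0:ℝ)..(σ n), f s| ≤ ε * σ n := by
  intro n
  induction n with
  | zero =>
    intro _ _
    simp [h0]
  | succ k ih =>
    intro hj hub
    have hinck := hj (k + 1) (by omega) le_rfl
    simp only [Nat.add_sub_cancel] at hinck
    have hmonok : ∀ j, 1 ≤ j → j ≤ k → 0 ≤ σ j - σ (j - 1) ∧ σ j - σ (j - 1) ≤ δ :=
      fun j hj1 hj2 => hj j hj1 (by omega)
    have hσk0 : 0 ≤ σ k := by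
      have := nonneg_aux σ k (fun j a b => (hmonok j a b).1)
      linarith [h0 ▸ this]
    have hσk1u : σ (k + 1) ≤ 1 := hub
    have hσku : σ k ≤ 1 := by linarith
    have hσk10 : 0 ≤ σ (k + 1) := by linarith
    have ihk := ih hmonok hσku
    -- integrability
    have hsub1 : Set.uIcc (0:ℝ) (σ k) ⊆ Set.Icc 0 1 := by
      rw [Set.uIcc_of_le hσk0]; exact Set.Icc_subset_Icc_right hσku
    have hsub2 : Set.uIcc (σ k) (σ (k + 1)) ⊆ Set.Icc 0 1 := by
      rw [Set.uIcc_of_le (by linarith : σ k ≤ σ (k + 1))]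
      exact Set.Icc_subset_Icc (by linarith) (by linarith)
    have hint1 : IntervalIntegrable f volume 0 (σ k) :=
      (hfc.mono hsub1).intervalIntegrable
    have hint2 : IntervalIntegrable f volume (σ k) (σ (k + 1)) :=
      (hfc.mono hsub2).intervalIntegrable
    rw [Finset.sum_Icc_succ_top (Nat.le_add_left 1 k),
      ← intervalIntegral.integral_add_adjacent_intervals hint1 hint2]
    simp only [Nat.add_sub_cancel]
    have hterm : |f (σ k) * (σ (k + 1) - σ k) - ∫ s in (σ k)..(σ (k + 1)), f s| ≤
        ε * (σ (k + 1) - σ k) := by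
      have hconst : f (σ k) * (σ (k + 1) - σ k) = ∫ _ in (σ k)..(σ (k + 1)), f (σ k) := by
        rw [intervalIntegral.integral_const]; ring_nf
      rw [hconst, ← intervalIntegral.integral_sub intervalIntegrable_const hint2]
      have hb : ∀ x ∈ Set.uIoc (σ k) (σ (k + 1)), ‖f (σ k) - f x‖ ≤ ε := by
        intro x hx
        rw [Set.uIoc_of_le (by linarith : σ k ≤ σ (k + 1))] at hx
        have hx1 : x ∈ Set.Icc (0:ℝ) 1 := ⟨by linarith [hx.1], by linarith [hx.2]⟩
        have : |σ k - x| ≤ δ := by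
          rw [abs_of_nonpos (by linarith [hx.1])]
          linarith [hx.2]
        exact hf (σ k) ⟨hσk0, hσku⟩ x hx1 this
      have := intervalIntegral.norm_integral_le_of_norm_le_const hb
      rwa [Real.norm_eq_abs, abs_of_nonneg (by linarith : (0:ℝ) ≤ σ (k+1) - σ k)] at this
    calc |(∑ j ∈ Finset.Icc 1 k, f (σ (j - 1)) * (σ j - σ (j - 1)) +
            f (σ k) * (σ (k + 1) - σ k)) -
          ((∫ s in (0:ℝ)..(σ k), f s) + ∫ s in (σ k)..(σ (k + 1)), f s)|
        ≤ |(∑ j ∈ Finset.Icc 1 k, f (σ (j - 1)) * (σ j - σ (j - 1))) -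
            ∫ s in (0:ℝ)..(σ k), f s| +
          |f (σ k) * (σ (k + 1) - σ k) - ∫ s in (σ k)..(σ (k + 1)), f s| := by
          have := abs_add_le ((∑ j ∈ Finset.Icc 1 k, f (σ (j - 1)) * (σ j - σ (j - 1))) -
              ∫ s in (0:ℝ)..(σ k), f s)
            (f (σ k) * (σ (k + 1) - σ k) - ∫ s in (σ k)..(σ (k + 1)), f s)
          refine (congrArg abs ?_).trans_le this
          ring
      _ ≤ ε * σ k + ε * (σ (k + 1) - σ k) := add_le_add ihk hterm
      _ = ε * σ (k + 1) := by ring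

/-- Convergence of left Riemann sums for partitions with endpoints tending to 1
and mesh tending to 0. -/
lemma riemann_tendsto (f : ℝ → ℝ) (hf : ContinuousOn f (Set.Icc 0 1))
    (σ : ℕ → ℕ → ℝ) (n : ℕ → ℕ) (δ : ℕ → ℝ)
    (h0 : ∀ N, σ N 0 = 0)
    (hub : ∀ N, σ N (n N) ≤ 1)
    (hend : Tendsto (fun N => σ N (n N)) atTop (nhds 1))
    (hmesh : ∀ᶠ N in atTop, ∀ j, 1 ≤ j → j ≤ n N →
      0 ≤ σ N j - σ N (j - 1) ∧ σ N j - σ N (j - 1) ≤ δ N)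
    (hδ : Tendsto δ atTop (nhds 0)) :
    Tendsto (fun N => ∑ j ∈ Finset.Icc 1 (n N), f (σ N (j - 1)) * (σ N j - σ N (j - 1)))
      atTop (nhds (∫ s in (0:ℝ)..1, f s)) := by
  rw [Metric.tendsto_nhds]
  intro ε hε
  obtain ⟨M, hM⟩ := isCompact_Icc.exists_bound_of_continuousOn hf
  set M' : ℝ := M + 1 with hM'def
  have hM0 : 0 ≤ M := le_trans (norm_nonneg _) (hM 0 (by norm_num))
  have hM' : 0 < M' := by positivity
  have hε3 : 0 < ε / 3 := by positivity
  obtain ⟨δ0, hδ0, hδ0'⟩ := Metric.uniformContinuousOn_iff.1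
    (isCompact_Icc.uniformContinuousOn_of_continuous hf) (ε / 3) hε3
  have hmod : ∀ x ∈ Set.Icc (0:ℝ) 1, ∀ y ∈ Set.Icc (0:ℝ) 1, |x - y| ≤ δ0 / 2 →
      |f x - f y| ≤ ε / 3 := by
    intro x hx y hy hxy
    have := hδ0' x hx y hy (by rw [Real.dist_eq]; linarith)
    rw [Real.dist_eq] at this
    linarith
  have E2 : ∀ᶠ N in atTop, δ N ≤ δ0 / 2 := by
    have := (hδ.eventually (eventually_lt_nhds (show (0:ℝ) < δ0 / 2 by positivity)))
    filter_upwards [this] with N hN using le_of_lt hN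
  have E3 : ∀ᶠ N in atTop, 1 - σ N (n N) ≤ ε / 3 / M' := by
    have h' : ∀ᶠ x in nhds (1:ℝ), 1 - x ≤ ε / 3 / M' := by
      have : ∀ᶠ x in nhds (1:ℝ), 1 - ε / 3 / M' < x :=
        eventually_gt_nhds (by linarith [div_pos hε3 hM'])
      filter_upwards [this] with x hx; linarith
    exact hend.eventually h'
  filter_upwards [hmesh, E2, E3] with N hm hδN hendN
  have hm' : ∀ j, 1 ≤ j → j ≤ n N → 0 ≤ σ N j - σ N (j-1) ∧ σ N j - σ N (j-1) ≤ δ0 / 2 :=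
    fun j a b => ⟨(hm j a b).1, le_trans (hm j a b).2 hδN⟩
  have hσ0 : 0 ≤ σ N (n N) := by
    have := nonneg_aux (σ N) (n N) (fun j a b => (hm' j a b).1)
    linarith [h0 N ▸ this]
  have key := riemann_est f hf (ε / 3) (δ0 / 2) hmod (σ N) (h0 N) (n N) hm' (hub N)
  -- split the integral
  have hsub1 : Set.uIcc (0:ℝ) (σ N (n N)) ⊆ Set.Icc 0 1 := by
    rw [Set.uIcc_of_le hσ0]; exact Set.Icc_subset_Icc_right (hub N)
  have hsub2 : Set.uIcc (σ N (n N)) 1 ⊆ Set.Icc 0 1 := by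
    rw [Set.uIcc_of_le (hub N)]; exact Set.Icc_subset_Icc hσ0 le_rfl
  have hint1 : IntervalIntegrable f volume 0 (σ N (n N)) :=
    (hf.mono hsub1).intervalIntegrable
  have hint2 : IntervalIntegrable f volume (σ N (n N)) 1 :=
    (hf.mono hsub2).intervalIntegrable
  have hsplit : (∫ s in (0:ℝ)..1, f s) =
      (∫ s in (0:ℝ)..(σ N (n N)), f s) + ∫ s in (σ N (n N))..1, f s :=
    (intervalIntegral.integral_add_adjacent_intervals hint1 hint2).symm
  have htail : |∫ s in (σ N (n N))..1, f s| ≤ ε / 3 := by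
    have hb : ∀ x ∈ Set.uIoc (σ N (n N)) 1, ‖f x‖ ≤ M := by
      intro x hx
      rw [Set.uIoc_of_le (hub N)] at hx
      exact hM x ⟨by linarith [hx.1], hx.2⟩
    have := intervalIntegral.norm_integral_le_of_norm_le_const hb
    rw [Real.norm_eq_abs, abs_of_nonneg (by linarith [hub N] : (0:ℝ) ≤ 1 - σ N (n N))] at this
    calc |∫ s in (σ N (n N))..1, f s| ≤ M * (1 - σ N (n N)) := this
      _ ≤ M' * (ε / 3 / M') := by
          apply mul_le_mul (by linarith) hendN (by linarith [hub N]) (le_of_lt hM')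
      _ = ε / 3 := by field_simp
  rw [Real.dist_eq, hsplit]
  have h1 : |(∑ j ∈ Finset.Icc 1 (n N), f (σ N (j - 1)) * (σ N j - σ N (j - 1))) -
      ((∫ s in (0:ℝ)..(σ N (n N)), f s) + ∫ s in (σ N (n N))..1, f s)| ≤
      ε / 3 * σ N (n N) + ε / 3 := by
    have := abs_add_le ((∑ j ∈ Finset.Icc 1 (n N), f (σ N (j - 1)) * (σ N j - σ N (j - 1))) -
        ∫ s in (0:ℝ)..(σ N (n N)), f s) (-(∫ s in (σ N (n N))..1, f s))
    rw [abs_neg] at this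
    calc |(∑ j ∈ Finset.Icc 1 (n N), f (σ N (j - 1)) * (σ N j - σ N (j - 1))) -
        ((∫ s in (0:ℝ)..(σ N (n N)), f s) + ∫ s in (σ N (n N))..1, f s)| =
        |((∑ j ∈ Finset.Icc 1 (n N), f (σ N (j - 1)) * (σ N j - σ N (j - 1))) -
          ∫ s in (0:ℝ)..(σ N (n N)), f s) + -(∫ s in (σ N (n N))..1, f s)| := by congr 1; ring
      _ ≤ _ := this
      _ ≤ ε / 3 * σ N (n N) + ε / 3 := add_le_add key htail
  have : ε / 3 * σ N (n N) ≤ ε / 3 := by nlinarith [hub N]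
  linarith

/-- Numerator convergence: with `τ_j = ∑_{i=1}^j t_i`, `τ_0 = 0`,
`N(1) = #{j ≥ 1 : τ_j ≤ 1}`, if `W` is a.s. continuous on `[0,∞)`,
`τ_{N(1)} → 1` a.s., `N(1)/N → 1` a.s. and `max_{1 ≤ j ≤ 2N} t_j → 0` a.s., then
`∑_{j=1}^{N(1)} τ_j (W_{τ_j} − W_{τ_{j−1}}) → ∫_0^1 (W_1 − W_t) dt` a.s. -/
theorem numerator_tendsto {Ω : Type} [MeasurableSpace Ω] (μ : Measure Ω)
    [IsProbabilityMeasure μ] (t : ℕ → ℕ → Ω → ℝ) (hnn : ∀ N j ω, 0 ≤ t N j ω)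
    (τ : ℕ → ℕ → Ω → ℝ) (hτ : ∀ N i ω, τ N i ω = ∑ j ∈ Finset.Icc 1 i, t N j ω)
    (N1 : ℕ → Ω → ℕ)
    (hN1 : ∀ N ω, N1 N ω = Set.ncard {j : ℕ | 1 ≤ j ∧ τ N j ω ≤ 1})
    (W : Ω → ℝ → ℝ)
    (hW : ∀ᵐ ω ∂μ, ContinuousOn (W ω) (Set.Ici 0))
    (h2 : ∀ᵐ ω ∂μ, Tendsto (fun N : ℕ => (N1 N ω : ℝ) / N) atTop (nhds 1))
    (h3 : ∀ᵐ ω ∂μ, Tendsto (fun N : ℕ => τ N (N1 N ω) ω) atTop (nhds 1))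
    (h4 : ∀ᵐ ω ∂μ, Tendsto (fun N : ℕ => ⨆ j ∈ Finset.Icc 1 (2 * N), t N j ω)
      atTop (nhds 0)) :
    ∀ᵐ ω ∂μ, Tendsto (fun N : ℕ =>
        ∑ j ∈ Finset.Icc 1 (N1 N ω), τ N j ω * (W ω (τ N j ω) - W ω (τ N (j - 1) ω)))
      atTop (nhds (∫ s in (0 : ℝ)..1, (W ω 1 - W ω s))) := by
  filter_upwards [hW, h2, h3, h4] with ω hWω h2ω h3ω h4ω
  set f := W ω with hfdef
  have h0 : ∀ N, τ N 0 ω = 0 := fun N => by simp [hτ]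
  have hmono : ∀ N i j, i ≤ j → τ N i ω ≤ τ N j ω := by
    intro N i j hij
    rw [hτ, hτ]
    apply Finset.sum_le_sum_of_subset_of_nonneg (Finset.Icc_subset_Icc_right hij)
    intro k _ _; exact hnn N k ω
  have hpos : ∀ N j, 0 ≤ τ N j ω := fun N j => (h0 N) ▸ hmono N 0 j (Nat.zero_le j)
  have hinc : ∀ N j, 1 ≤ j → τ N j ω - τ N (j - 1) ω = t N j ω := by
    intro N j hj
    obtain ⟨k, rfl⟩ : ∃ k, j = k + 1 := ⟨j - 1, by omega⟩
    rw [hτ, hτ, Finset.sum_Icc_succ_top (Nat.le_add_left 1 k)]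
    simp only [Nat.add_sub_cancel]
    ring
  have hub : ∀ N, τ N (N1 N ω) ω ≤ 1 := by
    intro N
    by_contra hcon
    push_neg at hcon
    have hn0 : N1 N ω ≠ 0 := by
      intro h; rw [h, h0 N] at hcon; linarith
    have hsubS : {j : ℕ | 1 ≤ j ∧ τ N j ω ≤ 1} ⊆ Set.Icc 1 (N1 N ω - 1) := by
      intro j hj
      refine ⟨hj.1, ?_⟩
      by_contra hj2
      push_neg at hj2
      have := hmono N (N1 N ω) j (by omega)
      have := hj.2
      linarith
    have hle := Set.ncard_le_ncard hsubS (Set.finite_Icc _ _)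
    have hcard : (Set.Icc 1 (N1 N ω - 1)).ncard = N1 N ω - 1 := by
      rw [← Finset.coe_Icc, Set.ncard_coe_finset, Nat.card_Icc]; omega
    rw [hcard, ← hN1 N ω] at hle
    omega
  -- eventually N1 N ω ≤ 2 N
  have hev : ∀ᶠ N in atTop, N1 N ω ≤ 2 * N := by
    have h2' : ∀ᶠ N in atTop, (N1 N ω : ℝ) / N < 2 :=
      h2ω.eventually (eventually_lt_nhds one_lt_two)
    filter_upwards [h2', eventually_ge_atTop 1] with N hN hN1
    have hNpos : (0 : ℝ) < N := by exact_mod_cast Nat.lt_of_lt_of_le Nat.zero_lt_one hN1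
    have hlt : (N1 N ω : ℝ) < 2 * N := (div_lt_iff₀ hNpos).1 hN
    have : (N1 N ω : ℝ) < ((2 * N : ℕ) : ℝ) := by push_cast; linarith
    exact le_of_lt (Nat.cast_lt.1 this)
  -- mesh control
  set δ : ℕ → ℝ := fun N => ⨆ j ∈ Finset.Icc 1 (2 * N), t N j ω with hδdef
  have hbdd : ∀ N, BddAbove
      (Set.range (fun j => ⨆ _ : j ∈ Finset.Icc 1 (2 * N), t N j ω)) := by
    intro N
    apply Set.Finite.bddAbove
    apply Set.Finite.subset
      (Set.Finite.insert 0 ((Finset.Icc 1 (2 * N)).finite_toSet.image (fun j => t N j ω)))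
    rintro x ⟨j, rfl⟩
    by_cases hj : j ∈ Finset.Icc 1 (2 * N)
    · refine Set.mem_insert_of_mem _ ⟨j, hj, ?_⟩
      exact (ciSup_pos (f := fun _ => t N j ω) hj).symm
    · haveI : IsEmpty (j ∈ Finset.Icc 1 (2 * N)) := ⟨hj⟩
      have hz : (⨆ _ : j ∈ Finset.Icc 1 (2 * N), t N j ω) = 0 :=
        Real.iSup_of_isEmpty _
      exact hz ▸ Set.mem_insert _ _
  have hle_δ : ∀ N j, j ∈ Finset.Icc 1 (2 * N) → t N j ω ≤ δ N := by
    intro N j hj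
    have h1 : t N j ω = ⨆ _ : j ∈ Finset.Icc 1 (2 * N), t N j ω :=
      (ciSup_pos (f := fun _ => t N j ω) hj).symm
    rw [hδdef, h1]
    exact le_ciSup (hbdd N) j
  have hmesh : ∀ᶠ N in atTop, ∀ j, 1 ≤ j → j ≤ N1 N ω →
      0 ≤ τ N j ω - τ N (j - 1) ω ∧ τ N j ω - τ N (j - 1) ω ≤ δ N := by
    filter_upwards [hev] with N hN j hj1 hj2
    rw [hinc N j hj1]
    exact ⟨hnn N j ω, hle_δ N j (Finset.mem_Icc.2 ⟨hj1, by omega⟩)⟩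
  have hfc : ContinuousOn f (Set.Icc 0 1) := hWω.mono (fun x hx => hx.1)
  have hR := riemann_tendsto f hfc (fun N j => τ N j ω) (fun N => N1 N ω) δ
    h0 hub h3ω hmesh h4ω
  have hfcont1 : Tendsto (fun N => f (τ N (N1 N ω) ω)) atTop (nhds (f 1)) := by
    have hcw : ContinuousWithinAt f (Set.Ici 0) 1 := hWω 1 (by norm_num)
    apply hcw.tendsto.comp
    rw [tendsto_nhdsWithin_iff]
    exact ⟨h3ω, Eventually.of_forall (fun N => hpos N _)⟩
  have hA : Tendsto (fun N => τ N (N1 N ω) ω * f (τ N (N1 N ω) ω)) atTop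
      (nhds (1 * f 1)) := h3ω.mul hfcont1
  have hrw : ∀ N, ∑ j ∈ Finset.Icc 1 (N1 N ω), τ N j ω * (f (τ N j ω) - f (τ N (j - 1) ω)) =
      τ N (N1 N ω) ω * f (τ N (N1 N ω) ω) -
        ∑ j ∈ Finset.Icc 1 (N1 N ω), f (τ N (j - 1) ω) * (τ N j ω - τ N (j - 1) ω) := by
    intro N
    have hterm : ∀ j ∈ Finset.Icc 1 (N1 N ω),
        τ N j ω * (f (τ N j ω) - f (τ N (j - 1) ω)) =
        ((fun i => τ N i ω * f (τ N i ω)) j - (fun i => τ N i ω * f (τ N i ω)) (j - 1)) -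
          f (τ N (j - 1) ω) * (τ N j ω - τ N (j - 1) ω) := by
      intro j _; simp only; ring
    rw [Finset.sum_congr rfl hterm, Finset.sum_sub_distrib,
      tele_sum (fun i => τ N i ω * f (τ N i ω))]
    simp only [h0 N]
    ring
  have hfinal := hA.sub hR
  have hu : Set.uIcc (0 : ℝ) 1 = Set.Icc 0 1 := Set.uIcc_of_le (by norm_num)
  have hii : IntervalIntegrable f volume 0 1 := (hu ▸ hfc).intervalIntegrable
  have hgoal_eq : (∫ s in (0 : ℝ)..1, (f 1 - f s)) = 1 * f 1 - ∫ s in (0 : ℝ)..1, f s := by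
    rw [intervalIntegral.integral_sub intervalIntegrable_const hii,
      intervalIntegral.integral_const]
    norm_num
  rw [hgoal_eq]
  exact hfinal.congr (fun N => (hrw N).symm)
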